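/- For every α > 0 and every dimension d ≥ 1, there exists a finite constant C > 0 (depending only on α and d) such that for all x ∈ [0,1]^d, the difference |‖x‖^α − ∑_{i=1}^d x_i^α| is at most C · ∑_{i ≠ j} (x_i x_j)^{min(1,α)/2}, where ‖x‖ denotes the Euclidean norm. -/

import Mathlib

open Real Finset
open scoped NNReal

/-- On `[0,1]`, smaller positive exponents give larger powers. -/
lemma aux_rpow_exp_mono {t p q : ℝ} (ht0 : 0 ≤ t) (ht1 : t ≤ 1) (hq : 0 < q)
    (hqp : q ≤ p) : t ^ p ≤ t ^ q := by
  rcases eq_or_lt_of_le ht0 with h | h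
  · rw [← h, Real.zero_rpow (hq.trans_le hqp).ne', Real.zero_rpow hq.ne']
  · exact Real.rpow_le_rpow_of_exponent_ge h ht1 hqp

/-- Two-term subadditivity of `rpow` for exponents in `[0,1]`, real version. -/
lemma aux_rpow_add_le {a b p : ℝ} (ha : 0 ≤ a) (hb : 0 ≤ b) (hp : 0 ≤ p) (hp1 : p ≤ 1) :
    (a + b) ^ p ≤ a ^ p + b ^ p := by
  have h := NNReal.rpow_add_le_add_rpow a.toNNReal b.toNNReal hp hp1
  have h2 : ((a.toNNReal + b.toNNReal) ^ p : ℝ≥0) ≤ (a.toNNReal ^ p + b.toNNReal ^ p : ℝ≥0) := h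
  have := NNReal.coe_le_coe.2 h2
  rw [NNReal.coe_rpow, NNReal.coe_add, NNReal.coe_add, NNReal.coe_rpow, NNReal.coe_rpow,
    Real.coe_toNNReal a ha, Real.coe_toNNReal b hb] at this
  exact this

/-- Finset subadditivity of `rpow` for exponents in `(0,1]`. -/
lemma aux_rpow_sum_le {ι : Type*} {s : Finset ι} {f : ι → ℝ} {p : ℝ}
    (hf : ∀ i ∈ s, 0 ≤ f i) (hp : 0 < p) (hp1 : p ≤ 1) :
    (∑ i ∈ s, f i) ^ p ≤ ∑ i ∈ s, f i ^ p := by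
  induction s using Finset.cons_induction with
  | empty => simp [Real.zero_rpow hp.ne']
  | cons a s ha ih =>
    rw [Finset.sum_cons, Finset.sum_cons]
    have hfa : 0 ≤ f a := hf a (Finset.mem_cons_self a s)
    have hfs : 0 ≤ ∑ i ∈ s, f i :=
      Finset.sum_nonneg fun i hi => hf i (Finset.mem_cons_of_mem hi)
    calc (f a + ∑ i ∈ s, f i) ^ p ≤ f a ^ p + (∑ i ∈ s, f i) ^ p :=
          aux_rpow_add_le hfa hfs hp.le hp1
      _ ≤ f a ^ p + ∑ i ∈ s, f i ^ p := by
          gcongr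
          exact ih fun i hi => hf i (Finset.mem_cons_of_mem hi)

/-- Lipschitz-type bound for `rpow` with exponent `≥ 1` on `[0,1]`. -/
lemma aux_rpow_sub_le {u v γ : ℝ} (hγ : 1 ≤ γ) (hv : 0 ≤ v) (hvu : v ≤ u) (hu : u ≤ 1) :
    u ^ γ - v ^ γ ≤ γ * (u - v) := by
  have hu0 : 0 ≤ u := hv.trans hvu
  rcases eq_or_lt_of_le hu0 with h | h
  · have hv0 : v = 0 := le_antisymm (hvu.trans h.symm.le) hv
    simp [← h, hv0]
  · -- Bernoulli with s = v/u - 1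
    have hs : (-1 : ℝ) ≤ v / u - 1 := by
      have : 0 ≤ v / u := div_nonneg hv hu0
      linarith
    have hber := one_add_mul_self_le_rpow_one_add hs hγ
    rw [add_sub_cancel] at hber
    -- hber : 1 + γ * (v / u - 1) ≤ (v / u) ^ γ
    have hdiv : (v / u) ^ γ = v ^ γ / u ^ γ := Real.div_rpow hv hu0 γ
    have hupos : (0:ℝ) < u ^ γ := Real.rpow_pos_of_pos h γ
    have h1 : (1 + γ * (v / u - 1)) * u ^ γ ≤ v ^ γ := by
      rw [hdiv] at hber
      calc (1 + γ * (v / u - 1)) * u ^ γ ≤ v ^ γ / u ^ γ * u ^ γ := by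
            apply mul_le_mul_of_nonneg_right hber hupos.le
        _ = v ^ γ := div_mul_cancel₀ _ hupos.ne'
    have huγ1 : u ^ γ ≤ u := by
      calc u ^ γ ≤ u ^ (1:ℝ) := aux_rpow_exp_mono hu0 hu one_pos hγ
        _ = u := Real.rpow_one u
    have huγγ : u ^ γ * (γ * (1 - v / u)) ≤ γ * (u - v) := by
      have huu : u * (γ * (1 - v / u)) = γ * (u - v) := by
        field_simp
      have hnn : 0 ≤ γ * (1 - v / u) := by
        have : v / u ≤ 1 := (div_le_one h).2 (hvu.trans (le_refl u))
        have : 0 ≤ 1 - v / u := by linarith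
        positivity
      calc u ^ γ * (γ * (1 - v / u)) ≤ u * (γ * (1 - v / u)) :=
            mul_le_mul_of_nonneg_right huγ1 hnn
        _ = γ * (u - v) := huu
    nlinarith [hupos]

theorem stmt0 (α : ℝ) (hα : 0 < α) (d : ℕ) (hd : 1 ≤ d) :
    ∃ C : ℝ, 0 < C ∧ ∀ x : Fin d → ℝ, (∀ i, x i ∈ Set.Icc (0:ℝ) 1) →
      |(Real.sqrt (∑ i, x i ^ 2)) ^ α - ∑ i, x i ^ α|
        ≤ C * ∑ i, ∑ j, if i ≠ j then (x i * x j) ^ (min 1 α / 2) else 0 := by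
  have hd0 : (0:ℕ) < d := hd
  have : Nonempty (Fin d) := ⟨⟨0, hd0⟩⟩
  set β : ℝ := min 1 α / 2 with hβ_def
  have hβ0 : 0 < β := by
    have := lt_min one_pos hα
    positivity
  have hβα2 : β ≤ α / 2 := by
    have : min 1 α ≤ α := min_le_right _ _
    linarith
  have hβ1 : β ≤ 1 := by
    have : min 1 α ≤ 1 := min_le_left _ _
    linarith
  set C : ℝ := 1 + α * (d:ℝ) ^ α with hC_def
  have hd1 : (1:ℝ) ≤ (d:ℝ) := by exact_mod_cast hd
  have hC0 : 0 < C := by positivity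
  have hC1 : (1:ℝ) ≤ C := by
    have : 0 ≤ α * (d:ℝ) ^ α := by positivity
    linarith
  refine ⟨C, hC0, fun x hx => ?_⟩
  have hx0 : ∀ i, 0 ≤ x i := fun i => (hx i).1
  have hx1 : ∀ i, x i ≤ 1 := fun i => (hx i).2
  obtain ⟨k, -, hk⟩ := Finset.exists_max_image Finset.univ x Finset.univ_nonempty
  have hk' : ∀ i, x i ≤ x k := fun i => hk i (Finset.mem_univ i)
  set m : ℝ := x k with hm_def
  have hm0 : 0 ≤ m := hx0 k
  have hm1 : m ≤ 1 := hx1 k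
  set R : ℝ := ∑ i ∈ Finset.univ.erase k, (x i * x k) ^ β with hR_def
  have hR0 : 0 ≤ R :=
    Finset.sum_nonneg fun i _ => Real.rpow_nonneg (mul_nonneg (hx0 i) hm0) β
  set T : ℝ := ∑ i, ∑ j, if i ≠ j then (x i * x j) ^ β else 0 with hT_def
  have hT0 : 0 ≤ T := by
    apply Finset.sum_nonneg; intro i _
    apply Finset.sum_nonneg; intro j _
    split
    · exact Real.rpow_nonneg (mul_nonneg (hx0 i) (hx0 j)) β
    · exact le_rfl
  -- R ≤ T
  have hRT : R ≤ T := by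
    rw [hR_def, hT_def]
    calc ∑ i ∈ Finset.univ.erase k, (x i * x k) ^ β
        ≤ ∑ i ∈ Finset.univ.erase k, ∑ j, (if i ≠ j then (x i * x j) ^ β else 0) := by
          apply Finset.sum_le_sum
          intro i hi
          have hik : i ≠ k := Finset.ne_of_mem_erase hi
          have := Finset.single_le_sum
            (f := fun j => if i ≠ j then (x i * x j) ^ β else 0)
            (fun j _ => by
              split
              · exact Real.rpow_nonneg (mul_nonneg (hx0 i) (hx0 j)) β
              · exact le_rfl) (Finset.mem_univ k)
          simpa [hik] using this
      _ ≤ ∑ i, ∑ j, (if i ≠ j then (x i * x j) ^ β else 0) := by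
          apply Finset.sum_le_sum_of_subset_of_nonneg (Finset.erase_subset _ _)
          intro i _ _
          apply Finset.sum_nonneg; intro j _
          split
          · exact Real.rpow_nonneg (mul_nonneg (hx0 i) (hx0 j)) β
          · exact le_rfl
  -- each x i ^ α ≤ (x i * x k) ^ β for i ≠ k
  have hterm : ∀ i, x i ^ α ≤ (x i * x k) ^ β := by
    intro i
    have h1 : x i ^ α ≤ (x i * x k) ^ (α / 2) := by
      have : x i ^ α = (x i * x i) ^ (α / 2) := by
        rw [← sq, ← Real.rpow_natCast_mul (hx0 i) 2 (α / 2)]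
        congr 1
        push_cast
        ring
      rw [this]
      apply Real.rpow_le_rpow (mul_nonneg (hx0 i) (hx0 i))
        (mul_le_mul_of_nonneg_left (hk' i) (hx0 i)) (by positivity)
    refine h1.trans (aux_rpow_exp_mono (mul_nonneg (hx0 i) hm0) ?_ hβ0 hβα2)
    exact mul_le_one₀ (hx1 i) hm0 hm1
  -- Sum of powers bounded: m^α ≤ ∑ x i ^ α ≤ m^α + R
  have hsum_lo : m ^ α ≤ ∑ i, x i ^ α :=
    Finset.single_le_sum (fun i _ => Real.rpow_nonneg (hx0 i) α) (Finset.mem_univ k)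
  have hsum_hi : ∑ i, x i ^ α ≤ m ^ α + R := by
    rw [← Finset.add_sum_erase _ _ (Finset.mem_univ k), hR_def, hm_def]
    gcongr with i hi
    exact hterm i
  -- the norm term
  set S : ℝ := ∑ i, x i ^ 2 with hS_def
  have hS0 : 0 ≤ S := Finset.sum_nonneg fun i _ => sq_nonneg _
  set b : ℝ := ∑ i ∈ Finset.univ.erase k, x k * x i with hb_def
  have hb0 : 0 ≤ b := Finset.sum_nonneg fun i _ => mul_nonneg hm0 (hx0 i)
  have hSb : S ≤ m ^ (2:ℕ) + b := by
    rw [hS_def, ← Finset.add_sum_erase _ _ (Finset.mem_univ k), hb_def, hm_def]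
    gcongr with i hi
    calc x i ^ 2 = x i * x i := sq (x i)
      _ ≤ x k * x i := mul_le_mul_of_nonneg_right (hk' i) (hx0 i)
  have hbd : m ^ (2:ℕ) + b ≤ (d:ℝ) := by
    have h1 : m ^ (2:ℕ) ≤ 1 := by nlinarith
    have h2 : b ≤ ((Finset.univ.erase k).card : ℝ) := by
      rw [hb_def]
      calc ∑ i ∈ Finset.univ.erase k, x k * x i
          ≤ ∑ _i ∈ Finset.univ.erase k, (1:ℝ) := by
            apply Finset.sum_le_sum
            intro i _
            exact mul_le_one₀ hm1 (hx0 i) (hx1 i)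
        _ = ((Finset.univ.erase k).card : ℝ) := by simp
    have h3 : (Finset.univ.erase k).card = d - 1 := by
      rw [Finset.card_erase_of_mem (Finset.mem_univ k)]
      simp
    rw [h3] at h2
    have h4 : ((d - 1 : ℕ) : ℝ) = (d:ℝ) - 1 := by
      rw [Nat.cast_sub hd]; norm_num
    rw [h4] at h2
    linarith
  have hnorm_eq : (Real.sqrt S) ^ α = S ^ (α / 2) := by
    rw [Real.sqrt_eq_rpow, ← Real.rpow_mul hS0]
    congr 1
    ring
  have hmS : m ^ (2:ℕ) ≤ S := by
    rw [hS_def]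
    exact Finset.single_le_sum (fun i _ => sq_nonneg (x i)) (Finset.mem_univ k)
  have hmα_eq : (m ^ (2:ℕ)) ^ (α/2 : ℝ) = m ^ α := by
    rw [← Real.rpow_natCast_mul hm0 2 (α/2)]
    congr 1
    push_cast
    ring
  -- lower bound for norm term
  have hnorm_lo : m ^ α ≤ (Real.sqrt S) ^ α := by
    rw [hnorm_eq, ← hmα_eq]
    exact Real.rpow_le_rpow (by positivity) hmS (by positivity)
  -- upper bound for norm term
  have hbR : b ≤ R := by
    rw [hb_def, hR_def]
    apply Finset.sum_le_sum
    intro i _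
    rw [mul_comm (x k) (x i)]
    have h01 : 0 ≤ x i * x k := mul_nonneg (hx0 i) hm0
    have h11 : x i * x k ≤ 1 := mul_le_one₀ (hx1 i) hm0 hm1
    calc x i * x k = (x i * x k) ^ (1:ℝ) := (Real.rpow_one _).symm
      _ ≤ (x i * x k) ^ β := aux_rpow_exp_mono h01 h11 hβ0 hβ1
  have hnorm_hi : (Real.sqrt S) ^ α ≤ m ^ α + C * R := by
    rw [hnorm_eq]
    have hstep : S ^ (α/2 : ℝ) ≤ (m ^ (2:ℕ) + b) ^ (α/2 : ℝ) :=
      Real.rpow_le_rpow hS0 hSb (by positivity)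
    rcases le_or_gt (α/2) 1 with hγ | hγ
    · -- subadditive case
      have h1 : (m ^ (2:ℕ) + b) ^ (α/2 : ℝ) ≤ (m ^ (2:ℕ)) ^ (α/2 : ℝ) + b ^ (α/2 : ℝ) :=
        aux_rpow_add_le (by positivity) hb0 (by positivity) hγ
      have h2 : b ^ (α/2 : ℝ) ≤ R := by
        rw [hb_def, hR_def]
        calc (∑ i ∈ Finset.univ.erase k, x k * x i) ^ (α/2 : ℝ)
            ≤ ∑ i ∈ Finset.univ.erase k, (x k * x i) ^ (α/2 : ℝ) :=
              aux_rpow_sum_le (fun i _ => mul_nonneg hm0 (hx0 i)) (by positivity) hγ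
          _ ≤ ∑ i ∈ Finset.univ.erase k, (x i * x k) ^ β := by
              apply Finset.sum_le_sum
              intro i _
              rw [mul_comm (x k) (x i)]
              exact aux_rpow_exp_mono (mul_nonneg (hx0 i) hm0)
                (mul_le_one₀ (hx1 i) hm0 hm1) hβ0 hβα2
      have hCR : R ≤ C * R := le_mul_of_one_le_left hR0 hC1
      calc S ^ (α/2 : ℝ) ≤ (m ^ (2:ℕ)) ^ (α/2 : ℝ) + b ^ (α/2 : ℝ) := hstep.trans h1
        _ ≤ m ^ α + R := by rw [hmα_eq]; exact add_le_add_right h2 _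
        _ ≤ m ^ α + C * R := by linarith
    · -- Lipschitz case, α/2 > 1
      have hDpos : (0:ℝ) < (d:ℝ) := lt_of_lt_of_le one_pos hd1
      set u : ℝ := (m ^ (2:ℕ) + b) / (d:ℝ) with hu_def
      set v : ℝ := m ^ (2:ℕ) / (d:ℝ) with hv_def
      have hv0 : 0 ≤ v := by positivity
      have hvu : v ≤ u := by
        rw [hu_def, hv_def]
        gcongr
        linarith
      have hu1 : u ≤ 1 := by
        rw [hu_def]
        exact (div_le_one hDpos).2 hbd
      have hlip := aux_rpow_sub_le hγ.le hv0 hvu hu1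
      have huv : u - v = b / (d:ℝ) := by
        rw [hu_def, hv_def]; ring
      have hu_eq : u ^ (α/2 : ℝ) * (d:ℝ) ^ (α/2 : ℝ) = (m ^ (2:ℕ) + b) ^ (α/2 : ℝ) := by
        rw [hu_def, ← Real.mul_rpow (by positivity) hDpos.le, div_mul_cancel₀ _ hDpos.ne']
      have hv_eq : v ^ (α/2 : ℝ) * (d:ℝ) ^ (α/2 : ℝ) = (m ^ (2:ℕ)) ^ (α/2 : ℝ) := by
        rw [hv_def, ← Real.mul_rpow (by positivity) hDpos.le, div_mul_cancel₀ _ hDpos.ne']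
      have hDα : (0:ℝ) < (d:ℝ) ^ (α/2 : ℝ) := Real.rpow_pos_of_pos hDpos _
      have hmain : (m ^ (2:ℕ) + b) ^ (α/2 : ℝ) - (m ^ (2:ℕ)) ^ (α/2 : ℝ)
          ≤ (α/2) * (d:ℝ) ^ (α/2 : ℝ) * (b / (d:ℝ)) := by
        rw [← hu_eq, ← hv_eq, ← huv]
        calc u ^ (α/2 : ℝ) * (d:ℝ) ^ (α/2:ℝ) - v ^ (α/2:ℝ) * (d:ℝ) ^ (α/2:ℝ)
            = (u ^ (α/2:ℝ) - v ^ (α/2:ℝ)) * (d:ℝ) ^ (α/2:ℝ) := by ring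
          _ ≤ ((α/2) * (u - v)) * (d:ℝ) ^ (α/2:ℝ) := by
              apply mul_le_mul_of_nonneg_right hlip hDα.le
          _ = (α/2) * (d:ℝ) ^ (α/2:ℝ) * (u - v) := by ring
      have hfactor : (α/2) * (d:ℝ) ^ (α/2 : ℝ) * (b / (d:ℝ)) ≤ C * R := by
        have hbD : b / (d:ℝ) ≤ b := div_le_self hb0 hd1
        have hDαα : (d:ℝ) ^ (α/2 : ℝ) ≤ (d:ℝ) ^ α :=
          Real.rpow_le_rpow_of_exponent_le hd1 (by linarith)
        have hcoef : (α/2) * (d:ℝ) ^ (α/2 : ℝ) ≤ C := by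
          have h1 : (α/2) * (d:ℝ) ^ (α/2 : ℝ) ≤ α * (d:ℝ) ^ α := by
            apply mul_le_mul (by linarith) hDαα (by positivity) (by linarith)
          linarith
        calc (α/2) * (d:ℝ) ^ (α/2 : ℝ) * (b / (d:ℝ))
            ≤ (α/2) * (d:ℝ) ^ (α/2 : ℝ) * b := by
              apply mul_le_mul_of_nonneg_left hbD (by positivity)
          _ ≤ C * R := by
              apply mul_le_mul hcoef hbR hb0 hC0.le
      have := hstep.trans (by linarith [hmain, hfactor] :
        (m ^ (2:ℕ) + b) ^ (α/2 : ℝ) ≤ (m ^ (2:ℕ)) ^ (α/2 : ℝ) + C * R)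
      rw [hmα_eq] at this
      exact this
  -- conclude
  have hRCT : C * R ≤ C * T := mul_le_mul_of_nonneg_left hRT hC0.le
  have hRT' : R ≤ C * T := hRT.trans (le_mul_of_one_le_left hT0 hC1)
  rw [abs_sub_le_iff]
  constructor
  · linarith
  · linarith
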